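/- Let F: ℝ^d → ℝ⁺ be μ-strongly convex with minimum F* ≥ 0. Let λ > 0, ε ∈ (0, 1/2], y ∈ ℝ^d, and let x satisfy F_{λ,y}(x) ≤ (1 + ε) min_z F_{λ,y}(z), where F_{λ,y}(z) = F(z) + λ‖z − y‖₂². Then F(x) − F* ≤ (1/(1−ε)) · (2λ/(μ + 2λ)) · (F(y) − F*) + (ε/(1−ε)) F*. -/

import Mathlib

/-- One step of the approximate proximal point method with a multiplicative ε-oracle:
if `F_{λ,y}(x) ≤ (1+ε) min_z F_{λ,y}(z)` then
`F(x) − F* ≤ (1/(1−ε)) (2λ/(μ+2λ)) (F(y) − F*) + (ε/(1−ε)) F*`. -/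
theorem stmt_8 {d : ℕ} (F : EuclideanSpace ℝ (Fin d) → ℝ) (μ : ℝ) (hμ : 0 < μ)
    (hF : StrongConvexOn Set.univ μ F) (hFnn : ∀ x, 0 ≤ F x)
    (xstar : EuclideanSpace ℝ (Fin d)) (hxstar : IsMinOn F Set.univ xstar)
    (lam ε : ℝ) (hlam : 0 < lam) (hε : 0 < ε) (hε' : ε ≤ 1 / 2)
    (y xm x : EuclideanSpace ℝ (Fin d))
    (hxm : IsMinOn (fun z => F z + lam * ‖z - y‖ ^ 2) Set.univ xm)
    (horacle : F x + lam * ‖x - y‖ ^ 2 ≤ (1 + ε) * (F xm + lam * ‖xm - y‖ ^ 2)) :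
    F x - F xstar ≤
      (1 / (1 - ε)) * (2 * lam / (μ + 2 * lam)) * (F y - F xstar) +
        (ε / (1 - ε)) * F xstar := by
  have hden : 0 < μ + 2 * lam := by linarith
  set t : ℝ := μ / (μ + 2 * lam) with ht
  have ht0 : 0 ≤ t := by positivity
  have ht1 : t ≤ 1 := by rw [ht, div_le_one hden]; linarith
  have hsc := hF.2 (Set.mem_univ xstar) (Set.mem_univ y) ht0 (by linarith : (0:ℝ) ≤ 1 - t)
    (by ring : t + (1 - t) = 1)
  set z := t • xstar + (1 - t) • y with hz
  have hznorm : ‖z - y‖ = t * ‖xstar - y‖ := by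
    have hzy : z - y = t • (xstar - y) := by
      rw [hz]; module
    rw [hzy, norm_smul, Real.norm_eq_abs, abs_of_nonneg ht0]
  have hxm' := hxm (Set.mem_univ z)
  simp only [Set.mem_univ] at hxm'
  have hcoef : lam * t ^ 2 - μ / 2 * (t * (1 - t)) = 0 := by
    rw [ht]; field_simp; ring
  have hN : (0:ℝ) ≤ ‖xstar - y‖ ^ 2 := by positivity
  have hfrost : F xm + lam * ‖xm - y‖ ^ 2 ≤
      F xstar + (2 * lam / (μ + 2 * lam)) * (F y - F xstar) := by
    have hc2 : (lam * t ^ 2 - μ / 2 * (t * (1 - t))) * ‖xstar - y‖ ^ 2 = 0 := by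
      rw [hcoef]; ring
    simp only [smul_eq_mul] at hsc
    have h1 : F z + lam * ‖z - y‖ ^ 2 ≤ t * F xstar + (1 - t) * F y := by
      rw [hznorm, mul_pow]
      nlinarith [hsc, hc2]
    have h2 : t * F xstar + (1 - t) * F y
        = F xstar + (2 * lam / (μ + 2 * lam)) * (F y - F xstar) := by
      rw [ht]; field_simp; ring
    calc F xm + lam * ‖xm - y‖ ^ 2 ≤ F z + lam * ‖z - y‖ ^ 2 := hxm'
      _ ≤ t * F xstar + (1 - t) * F y := h1
      _ = _ := h2
  have hFx : F x ≤ (1 + ε) * (F xstar + (2 * lam / (μ + 2 * lam)) * (F y - F xstar)) := by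
    have hx2 : (0:ℝ) ≤ lam * ‖x - y‖ ^ 2 := by positivity
    have := mul_le_mul_of_nonneg_left hfrost (by linarith : (0:ℝ) ≤ 1 + ε)
    linarith
  have hΔ : 0 ≤ F y - F xstar := by
    have := hxstar (Set.mem_univ y); simpa using this
  have hA : 0 ≤ (2 * lam / (μ + 2 * lam)) * (F y - F xstar) := by positivity
  have hS : 0 ≤ F xstar := hFnn xstar
  set A := (2 * lam / (μ + 2 * lam)) * (F y - F xstar) with hAdef
  have h1ε : (0:ℝ) < 1 - ε := by linarith
  calc F x - F xstar ≤ (A + ε * F xstar) / (1 - ε) := by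
        rw [le_div_iff₀ h1ε]
        nlinarith [hFx, hA, hS, mul_nonneg hA (le_of_lt hε), mul_nonneg hS (le_of_lt hε),
          mul_nonneg (mul_nonneg hS (le_of_lt hε)) (le_of_lt hε),
          mul_nonneg (mul_nonneg hA (le_of_lt hε)) (le_of_lt hε)]
    _ = (1 / (1 - ε)) * (2 * lam / (μ + 2 * lam)) * (F y - F xstar) +
        (ε / (1 - ε)) * F xstar := by
        rw [hAdef]; field_simp
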